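/- In a thin concurrent game, the polarized factorization of symmetries is unique: if θ : x ≅_A z is a symmetry, and θ = θ⁺ ∘ θ⁻ = φ⁺ ∘ φ⁻ are two factorizations with θ⁻, φ⁻ negative and θ⁺, φ⁺ positive, then θ⁻ = φ⁻ and θ⁺ = φ⁺ (given the existence of such a factorization and the axiom that a symmetry both positive and negative is an identity). -/
import Mathlib


open CategoryTheory

/-- Uniqueness of the polarized factorization of symmetries in a thin
concurrent game. Abstractly: in the groupoid of symmetries of a thin
concurrent game, with `Pos` and `Neg` the positive and negative sub-families
(each closed under identities, composition and inverses, as isomorphism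
families), assuming that a symmetry which is both positive and negative is an
identity, any two factorizations `θ = θ⁺ ∘ θ⁻ = φ⁺ ∘ φ⁻` with negative parts
`θ⁻, φ⁻` and positive parts `θ⁺, φ⁺` agree (up to the induced equality of
middle objects). -/
theorem thin_factorization_unique (C : Type) [Groupoid.{0} C]
    (Pos Neg : ∀ {x y : C}, (x ⟶ y) → Prop)
    (hPosId : ∀ x : C, Pos (𝟙 x)) (hNegId : ∀ x : C, Neg (𝟙 x))
    (hPosComp : ∀ {x y z : C} (f : x ⟶ y) (g : y ⟶ z),
      Pos f → Pos g → Pos (f ≫ g))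
    (hNegComp : ∀ {x y z : C} (f : x ⟶ y) (g : y ⟶ z),
      Neg f → Neg g → Neg (f ≫ g))
    (hPosInv : ∀ {x y : C} (f : x ⟶ y), Pos f → Pos (Groupoid.inv f))
    (hNegInv : ∀ {x y : C} (f : x ⟶ y), Neg f → Neg (Groupoid.inv f))
    (hPN : ∀ {x y : C} (f : x ⟶ y), Pos f → Neg f → ∃ h : x = y,
      f = eqToHom h)
    (x y y' z : C) (θm : x ⟶ y) (θp : y ⟶ z) (φm : x ⟶ y') (φp : y' ⟶ z)
    (hθm : Neg θm) (hθp : Pos θp) (hφm : Neg φm) (hφp : Pos φp)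
    (heq : θm ≫ θp = φm ≫ φp) :
    ∃ h : y = y', θm ≫ eqToHom h = φm ∧ eqToHom h ≫ φp = θp := by
  set g : y ⟶ y' := Groupoid.inv θm ≫ φm with hg
  have hgneg : Neg g := hNegComp _ _ (hNegInv _ hθm) hφm
  have hgeq : g = θp ≫ Groupoid.inv φp := by
    rw [hg]
    rw [← Category.comp_id (Groupoid.inv θm ≫ φm)]
    rw [← Groupoid.comp_inv φp]
    simp only [← Category.assoc]
    congr 1
    rw [Category.assoc, ← heq, ← Category.assoc, Groupoid.inv_comp,
      Category.id_comp]
  have hgpos : Pos g := by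
    rw [hgeq]; exact hPosComp _ _ hθp (hPosInv _ hφp)
  obtain ⟨h, hgh⟩ := hPN g hgpos hgneg
  refine ⟨h, ?_, ?_⟩
  · rw [← hgh, hg, ← Category.assoc, Groupoid.comp_inv, Category.id_comp]
  · rw [← hgh, hgeq, Category.assoc, Groupoid.inv_comp, Category.comp_id]
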